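/- If X·Xᵀ is positive definite, then the gradient-flow trajectory converges to the least-squares estimator: A_t → Y·Xᵀ·(X·Xᵀ)⁻¹ in Frobenius norm as t → +∞. -/

import Mathlib

open Matrix NormedSpace Filter

attribute [local instance] Matrix.frobeniusSeminormedAddCommGroup
  Matrix.frobeniusNormedAddCommGroup Matrix.frobeniusIsBoundedSMul Matrix.frobeniusNormedSpace

/-- If `X·Xᵀ` is positive definite, then the gradient-flow trajectory
`A_t = A_init·exp(−t·X·Xᵀ) + Y·Xᵀ·(X·Xᵀ)⁻¹·(I − exp(−t·X·Xᵀ))` converges to the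
least-squares estimator `Y·Xᵀ·(X·Xᵀ)⁻¹` in Frobenius norm as `t → +∞`. -/
theorem stmt3 (N M : ℕ) (hN : 0 < N) (hM : 0 < M)
    (X Y : Matrix (Fin N) (Fin M) ℝ)
    (hX : (X * Xᵀ).PosDef)
    (A_init : Matrix (Fin N) (Fin N) ℝ)
    (A : ℝ → Matrix (Fin N) (Fin N) ℝ)
    (hA : ∀ t : ℝ, A t =
      A_init * exp ((-t) • (X * Xᵀ)) +
        Y * Xᵀ * (X * Xᵀ)⁻¹ * (1 - exp ((-t) • (X * Xᵀ)))) :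
    Tendsto (fun t : ℝ => ‖A t - Y * Xᵀ * (X * Xᵀ)⁻¹‖) atTop (nhds 0) := by
  set S : Matrix (Fin N) (Fin N) ℝ := X * Xᵀ with hS
  set L : Matrix (Fin N) (Fin N) ℝ := Y * Xᵀ * (X * Xᵀ)⁻¹ with hL
  have hH : S.IsHermitian := hX.1
  set μ : Fin N → ℝ := hH.eigenvalues with hμ
  have hμpos : ∀ i, 0 < μ i := hX.eigenvalues_pos
  set U : (Matrix (Fin N) (Fin N) ℝ)ˣ := Unitary.toUnits hH.eigenvectorUnitary with hU
  have hUinv : ((U⁻¹ : (Matrix (Fin N) (Fin N) ℝ)ˣ) : Matrix (Fin N) (Fin N) ℝ)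
      = star (hH.eigenvectorUnitary : Matrix (Fin N) (Fin N) ℝ) := rfl
  have hspec : S = (U : Matrix (Fin N) (Fin N) ℝ) *
      Matrix.diagonal (RCLike.ofReal ∘ μ) * ((U⁻¹ : (Matrix (Fin N) (Fin N) ℝ)ˣ) :
        Matrix (Fin N) (Fin N) ℝ) := by
    rw [hUinv]
    exact hH.spectral_theorem
  -- the diagonal part
  set v : ℝ → (Fin N → ℝ) := fun t i => Real.exp (-t * μ i) with hv
  have hexp : ∀ t : ℝ, exp ((-t) • S) =
      (U : Matrix (Fin N) (Fin N) ℝ) * Matrix.diagonal (v t) *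
        ((U⁻¹ : (Matrix (Fin N) (Fin N) ℝ)ˣ) : Matrix (Fin N) (Fin N) ℝ) := by
    intro t
    have h1 : (-t) • S = (U : Matrix (Fin N) (Fin N) ℝ) *
        Matrix.diagonal (fun i => -t * μ i) *
          ((U⁻¹ : (Matrix (Fin N) (Fin N) ℝ)ˣ) : Matrix (Fin N) (Fin N) ℝ) := by
      rw [hspec, ← smul_mul_assoc, ← mul_smul_comm, ← Matrix.diagonal_smul]
      congr 2
    rw [h1, Matrix.exp_units_conj, Matrix.exp_diagonal, Pi.exp_def]
    have hfun : (fun i => exp (-t * μ i)) = v t := by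
      funext i
      exact congrFun Real.exp_eq_exp_ℝ.symm (-t * μ i)
    rw [hfun]
  have hdiff : ∀ t : ℝ, A t - L = (A_init - L) * exp ((-t) • S) := by
    intro t
    rw [hA t]
    noncomm_ring
  -- norm bound
  set C : ℝ := ‖A_init - L‖ * ‖(U : Matrix (Fin N) (Fin N) ℝ)‖ *
      ‖((U⁻¹ : (Matrix (Fin N) (Fin N) ℝ)ˣ) : Matrix (Fin N) (Fin N) ℝ)‖ with hC
  have hbound : ∀ t : ℝ, ‖A t - L‖ ≤ C * ‖Matrix.diagonal (v t)‖ := by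
    intro t
    rw [hdiff t, hexp t]
    calc ‖(A_init - L) * ((U : Matrix (Fin N) (Fin N) ℝ) * Matrix.diagonal (v t) *
          ((U⁻¹ : (Matrix (Fin N) (Fin N) ℝ)ˣ) : Matrix (Fin N) (Fin N) ℝ))‖
        ≤ ‖A_init - L‖ * ‖(U : Matrix (Fin N) (Fin N) ℝ) * Matrix.diagonal (v t) *
          ((U⁻¹ : (Matrix (Fin N) (Fin N) ℝ)ˣ) : Matrix (Fin N) (Fin N) ℝ)‖ :=
          Matrix.frobenius_norm_mul _ _
      _ ≤ ‖A_init - L‖ * (‖(U : Matrix (Fin N) (Fin N) ℝ) * Matrix.diagonal (v t)‖ *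
          ‖((U⁻¹ : (Matrix (Fin N) (Fin N) ℝ)ˣ) : Matrix (Fin N) (Fin N) ℝ)‖) := by
          gcongr
          exact Matrix.frobenius_norm_mul _ _
      _ ≤ ‖A_init - L‖ * ((‖(U : Matrix (Fin N) (Fin N) ℝ)‖ * ‖Matrix.diagonal (v t)‖) *
          ‖((U⁻¹ : (Matrix (Fin N) (Fin N) ℝ)ˣ) : Matrix (Fin N) (Fin N) ℝ)‖) := by
          gcongr
          exact Matrix.frobenius_norm_mul _ _
      _ = C * ‖Matrix.diagonal (v t)‖ := by rw [hC]; ring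
  -- the diagonal norm tends to zero
  have hdiagnorm : ∀ t : ℝ, ‖Matrix.diagonal (v t)‖ =
      Real.sqrt (∑ i, Real.exp (-t * μ i) ^ 2) := by
    intro t
    rw [Matrix.frobenius_norm_diagonal, EuclideanSpace.norm_eq]
    congr 1
    apply Finset.sum_congr rfl
    intro i _
    rw [Real.norm_eq_abs, sq_abs]
  have hsum : Tendsto (fun t : ℝ => ∑ i, Real.exp (-t * μ i) ^ 2) atTop (nhds 0) := by
    have : (0 : ℝ) = ∑ _i : Fin N, (0 : ℝ) := by simp
    rw [this]
    apply tendsto_finset_sum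
    intro i _
    have h1 : Tendsto (fun t : ℝ => -t * μ i) atTop atBot := by
      apply Tendsto.atBot_mul_const (hμpos i)
      exact tendsto_neg_atTop_atBot
    have h2 : Tendsto (fun t : ℝ => Real.exp (-t * μ i)) atTop (nhds 0) :=
      Real.tendsto_exp_atBot.comp h1
    have := h2.pow 2
    simpa using this
  have hdiag : Tendsto (fun t : ℝ => ‖Matrix.diagonal (v t)‖) atTop (nhds 0) := by
    simp_rw [hdiagnorm]
    have := (Real.continuous_sqrt.tendsto 0).comp hsum
    simpa [Real.sqrt_zero, Function.comp_def] using this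
  have hCmul : Tendsto (fun t : ℝ => C * ‖Matrix.diagonal (v t)‖) atTop (nhds 0) := by
    have := hdiag.const_mul C
    simpa using this
  exact squeeze_zero (fun t => norm_nonneg _) hbound hCmul
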